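/- Let P be a topological group that is an extension of ℤ_p^× by ℤ_p (i.e., there is a continuous surjection χ : P → ℤ_p^× with kernel isomorphic to ℤ_p). Let H ≤ P be a closed subgroup such that χ(H) is open in ℤ_p^× and H ∩ ℤ_p ≠ {0}. Then H is open in P. -/

import Mathlib

open Topology Multiplicative
open scoped Pointwise

section Aux

variable {p : ℕ} [Fact p.Prime]

/-- In `ℤ_p`, if `‖y‖ ≤ ‖z‖` and `z ≠ 0` then `z ∣ y`. -/
lemma stmt2_dvd_of_norm_le {z y : ℤ_[p]} (hz : z ≠ 0) (h : ‖y‖ ≤ ‖z‖) : z ∣ y := by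
  set n := z.valuation with hn
  have hzval : (n : ℤ) = z.valuation := rfl
  have hnorm : ‖z‖ = (p : ℝ) ^ (-(n : ℤ)) := by
    rw [PadicInt.norm_eq_zpow_neg_valuation hz]
  have hy : y ∈ (Ideal.span {(p : ℤ_[p]) ^ n} : Ideal ℤ_[p]) :=
    (PadicInt.norm_le_pow_iff_mem_span_pow y n).mp (by rw [← hnorm]; exact h)
  rw [Ideal.mem_span_singleton] at hy
  refine dvd_trans ?_ hy
  have hspec := PadicInt.unitCoeff_spec hz
  rw [hspec]
  rw [mul_comm]
  exact (Units.mul_right_dvd).mpr dvd_rfl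

/-- A closed subgroup of `Multiplicative ℤ_p` containing a nontrivial element has
nonzero (finite) index. -/
lemma stmt2_index_ne_zero (A : Subgroup (Multiplicative ℤ_[p]))
    (hA : IsClosed (A : Set (Multiplicative ℤ_[p])))
    {z : Multiplicative ℤ_[p]} (hzA : z ∈ A) (hz1 : z ≠ 1) : A.index ≠ 0 := by
  set T : Set ℤ_[p] := (Multiplicative.ofAdd) ⁻¹' (A : Set (Multiplicative ℤ_[p])) with hT
  have hTclosed : IsClosed T := hA.preimage continuous_ofAdd
  set w : ℤ_[p] := Multiplicative.toAdd z with hw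
  have hwT : w ∈ T := by simpa [hT, hw] using hzA
  have hw0 : w ≠ 0 := by
    intro h
    apply hz1
    have : Multiplicative.ofAdd w = z := rfl
    rw [← this, h, ofAdd_zero]
  have hball : ∀ y : ℤ_[p], ‖y‖ ≤ ‖w‖ → y ∈ T := by
    intro y hy
    obtain ⟨c, rfl⟩ := stmt2_dvd_of_norm_le hw0 hy
    have hnat : ∀ k : ℕ, w * (k : ℤ_[p]) ∈ T := by
      intro k
      have hk : Multiplicative.ofAdd ((k : ℤ_[p]) * w) ∈ A := by
        have : Multiplicative.ofAdd ((k : ℤ_[p]) * w) = z ^ k := by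
          rw [← nsmul_eq_mul, ofAdd_nsmul]
          rfl
        rw [this]
        exact pow_mem hzA k
      simpa [hT, mul_comm] using hk
    have hc : c ∈ closure (Set.range ((↑) : ℕ → ℤ_[p])) := PadicInt.denseRange_natCast c
    have : w * c ∈ closure T := by
      refine map_mem_closure (f := fun x : ℤ_[p] => w * x) ?_ hc ?_
      · exact continuous_const.mul continuous_id
      · rintro a ⟨k, rfl⟩
        exact hnat k
    rwa [hTclosed.closure_eq] at this
  have hAopen : IsOpen (A : Set (Multiplicative ℤ_[p])) := by
    apply A.isOpen_of_mem_nhds (g := 1)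
    have h0 : (A : Set (Multiplicative ℤ_[p])) ∈ 𝓝 (Multiplicative.ofAdd (0 : ℤ_[p])) := by
      rw [nhds_ofAdd, Filter.mem_map]
      refine Filter.mem_of_superset (Metric.closedBall_mem_nhds 0 (norm_pos_iff.mpr hw0)) ?_
      intro y hy
      have : ‖y‖ ≤ ‖w‖ := by
        simpa [dist_zero_right] using hy
      exact hball y this
    rwa [ofAdd_zero] at h0
  have hcompact : CompactSpace (Multiplicative ℤ_[p]) := inferInstanceAs (CompactSpace ℤ_[p])
  have hfin : Finite ((Multiplicative ℤ_[p]) ⧸ A) := A.quotient_finite_of_isOpen hAopen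
  exact (Subgroup.finiteIndex_of_finite_quotient (H := A)).index_ne_zero

instance stmt2_compactSpace_mulOpposite : CompactSpace (ℤ_[p]ᵐᵒᵖ) :=
  MulOpposite.opHomeomorph.compactSpace

instance stmt2_compactSpace_units : CompactSpace (ℤ_[p]ˣ) := by
  have hrange : Set.range (Units.embedProduct ℤ_[p]) =
      {x : ℤ_[p] × ℤ_[p]ᵐᵒᵖ | x.1 * x.2.unop = 1} := by
    ext x
    constructor
    · rintro ⟨u, rfl⟩
      simp [Units.embedProduct]
    · rintro hx
      refine ⟨⟨x.1, x.2.unop, hx, by rwa [mul_comm]⟩, ?_⟩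
      simp [Units.embedProduct]
  have hclosed : IsClosed (Set.range (Units.embedProduct ℤ_[p])) := by
    rw [hrange]
    exact isClosed_eq (continuous_fst.mul (MulOpposite.continuous_unop.comp continuous_snd))
      continuous_const
  have hce : Topology.IsClosedEmbedding (Units.embedProduct ℤ_[p]) :=
    ⟨Units.isEmbedding_embedProduct, hclosed⟩
  exact hce.compactSpace

end Aux

/-- Let `P` be a topological group which is an extension of `ℤ_p^×` by
`ℤ_p`: there is a continuous surjective homomorphism `χ : P → ℤ_p^×` whose kernel is the
image of a topological embedding `ι` of (the additive group) `ℤ_p`.  If `H ≤ P` is a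
closed subgroup such that `χ(H)` is open in `ℤ_p^×` and `H ∩ ℤ_p ≠ {0}`, then `H` is
open in `P`. -/
theorem stmt2 (p : ℕ) [Fact p.Prime]
    (P : Type*) [Group P] [TopologicalSpace P] [IsTopologicalGroup P]
    (χ : P →* ℤ_[p]ˣ) (hχcont : Continuous χ) (hχsurj : Function.Surjective χ)
    (ι : Multiplicative ℤ_[p] →* P) (hι : Topology.IsClosedEmbedding ι)
    (hker : Set.range ι = (χ.ker : Set P))
    (H : Subgroup P) (hH : IsClosed (H : Set P))
    (hHχ : IsOpen (χ '' (H : Set P)))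
    (hHι : ∃ x ∈ (H : Set P) ∩ Set.range ι, x ≠ 1) :
    IsOpen (H : Set P) := by
  set N := χ.ker with hNdef
  -- Step 1: the relative index of H in N is finite.
  have h1 : H.relIndex N ≠ 0 := by
    have he : ∀ z, ι z ∈ N := fun z => by
      rw [← SetLike.mem_coe, ← hker]; exact Set.mem_range_self z
    set e : Multiplicative ℤ_[p] →* N := ι.codRestrict N he with hedef
    have hesurj : Function.Surjective e := by
      rintro ⟨x, hx⟩
      have hx' : x ∈ Set.range ι := by rw [hker]; exact hx
      obtain ⟨z, hz⟩ := hx'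
      exact ⟨z, Subtype.ext hz⟩
    have hcomap : (H.subgroupOf N).comap e = H.comap ι := by
      ext z
      simp [Subgroup.mem_comap, Subgroup.mem_subgroupOf, hedef]
    have hind := Subgroup.index_comap_of_surjective (H.subgroupOf N) hesurj
    rw [hcomap] at hind
    rw [Subgroup.relIndex, ← hind]
    -- apply the auxiliary lemma
    obtain ⟨x, ⟨hxH, hxr⟩, hx1⟩ := hHι
    obtain ⟨z, rfl⟩ := hxr
    refine stmt2_index_ne_zero (H.comap ι) (hH.preimage hι.continuous) (z := z) hxH ?_
    intro h
    apply hx1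
    rw [h, map_one]
  -- Step 2: the index of H ⊔ N is finite.
  have h2 : (H ⊔ N).index ≠ 0 := by
    have hcm : (H.map χ).comap χ = H ⊔ N := Subgroup.comap_map_eq χ H
    have hind : (H ⊔ N).index = (H.map χ).index := by
      rw [← hcm, Subgroup.index_comap_of_surjective _ hχsurj]
    rw [hind]
    have hopen : IsOpen ((H.map χ : Subgroup ℤ_[p]ˣ) : Set ℤ_[p]ˣ) := by
      rw [Subgroup.coe_map]; exact hHχ
    have := Subgroup.quotient_finite_of_isOpen (H.map χ) hopen
    exact (Subgroup.finiteIndex_of_finite_quotient).index_ne_zero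
  -- Step 3: the relative index of H in H ⊔ N is finite.
  have h3 : H.relIndex (H ⊔ N) ≠ 0 := by
    haveI hfi : Subgroup.FiniteIndex (H.subgroupOf N) := ⟨h1⟩
    have hkey : ∀ a b : N, (QuotientGroup.leftRel (H.subgroupOf N)).r a b →
        (QuotientGroup.leftRel (H.subgroupOf (H ⊔ N))).r
          (Subgroup.inclusion (le_sup_right : N ≤ H ⊔ N) a)
          (Subgroup.inclusion (le_sup_right : N ≤ H ⊔ N) b) := by
      intro a b hab
      rw [QuotientGroup.leftRel_apply] at hab ⊢
      rw [Subgroup.mem_subgroupOf] at hab ⊢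
      simpa using hab
    have hsur : Function.Surjective
        (Quotient.map' (Subgroup.inclusion (le_sup_right : N ≤ H ⊔ N)) hkey :
          ↥N ⧸ H.subgroupOf N → ↥(H ⊔ N) ⧸ H.subgroupOf (H ⊔ N)) := by
      intro q
      refine Quotient.inductionOn' q (fun x => ?_)
      have hx : (x : P) ∈ ((N : Set P) * (H : Set P)) := by
        have hx0 : (x : P) ∈ (↑(N ⊔ H) : Set P) := by
          rw [sup_comm]; exact x.2
        rw [Subgroup.normal_mul] at hx0
        exact hx0
      obtain ⟨n, hn, h, hh, hx⟩ := hx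
      refine ⟨Quotient.mk'' ⟨n, hn⟩, ?_⟩
      rw [Quotient.map'_mk'']
      apply Quotient.sound'
      rw [QuotientGroup.leftRel_apply, Subgroup.mem_subgroupOf]
      show ((Subgroup.inclusion (le_sup_right : N ≤ H ⊔ N) ⟨n, hn⟩ : ↥(H ⊔ N)) : P)⁻¹ * x ∈ H
      have : ((Subgroup.inclusion (le_sup_right : N ≤ H ⊔ N) ⟨n, hn⟩ : ↥(H ⊔ N)) : P) = n := rfl
      rw [this, ← hx]
      simpa using hh
    have hfin : Finite (↥(H ⊔ N) ⧸ H.subgroupOf (H ⊔ N)) := Finite.of_surjective (α := ↥N ⧸ H.subgroupOf N) _ hsur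
    exact (Subgroup.finiteIndex_of_finite_quotient).index_ne_zero
  -- Combine.
  have hidx : H.index ≠ 0 := by
    rw [← Subgroup.relIndex_mul_index (le_sup_left : H ≤ H ⊔ N)]
    exact mul_ne_zero h3 h2
  have : H.FiniteIndex := ⟨hidx⟩
  exact H.isOpen_of_isClosed_of_finiteIndex hH
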